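/- Let p ≥ 5 be a prime. For every k ≥ 0, p^k(p²−1) divides p^{2(k+1)} − p^{2k}, so the residues of p^{2k} modulo p^k(p²−1) form a compatible sequence defining an element γ ∈ ℨ. The element γ has additive order exactly p² − 1, and the torsion subgroup of ℨ is the cyclic subgroup generated by γ. -/
import Mathlib


/-- The inverse limit `ℨ = lim_k ℤ/p^k(p²−1)ℤ`, realized as the additive subgroup of
`Π_{k≥0} ℤ/p^k(p²−1)ℤ` of sequences compatible under the natural reduction maps. -/
def Zfrak (p : ℕ) : AddSubgroup (∀ k : ℕ, ZMod (p ^ k * (p ^ 2 - 1))) where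
  carrier := {α | ∀ k : ℕ,
    ZMod.castHom (mul_dvd_mul (pow_dvd_pow p (Nat.le_succ k)) dvd_rfl)
      (ZMod (p ^ k * (p ^ 2 - 1))) (α (k + 1)) = α k}
  add_mem' := by
    intro a b ha hb k
    simp only [Pi.add_apply, map_add, ha k, hb k]
  zero_mem' := by
    intro k
    simp
  neg_mem' := by
    intro a ha k
    simp only [Pi.neg_apply, map_neg, ha k]

private lemma gamma_aux_cop {p : ℕ} (hp : p.Prime) (k : ℕ) :
    Nat.Coprime (p ^ k) (p ^ 2 - 1) := by
  refine Nat.Coprime.pow_left _ ((Nat.Prime.coprime_iff_not_dvd hp).mpr ?_)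
  intro h
  have h2 : p ∣ p ^ 2 := dvd_pow_self p two_ne_zero
  have h1 : p ∣ 1 := by
    have := Nat.dvd_sub h2 h
    rwa [Nat.sub_sub_self (Nat.one_le_pow 2 p hp.pos)] at this
  exact absurd (Nat.le_of_dvd one_pos h1) (by have := hp.one_lt; omega)

private lemma gamma_aux_pow_modeq {p : ℕ} (hp : 0 < p) (k : ℕ) :
    p ^ (2 * k) ≡ 1 [MOD p ^ 2 - 1] := by
  have hd : p ^ 2 - 1 ∣ p ^ (2 * k) - 1 := by
    have := Nat.sub_dvd_pow_sub_pow (p ^ 2) 1 k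
    rwa [one_pow, ← pow_mul] at this
  exact ((Nat.modEq_iff_dvd' (Nat.one_le_pow _ _ hp)).mpr hd).symm

/-- The element `γ = lim_k p^{2k} ∈ ℨ`: `p^k(p²−1) ∣ p^{2(k+1)} − p^{2k}`, so the residues
of `p^{2k}` define an element `γ ∈ ℨ`.  It has additive order exactly `p² − 1`, and the
torsion subgroup of `ℨ` is the cyclic subgroup generated by `γ`. -/
theorem gamma_generates_torsion (p : ℕ) [Fact p.Prime] (hp5 : 5 ≤ p) :
    (∀ k : ℕ, p ^ k * (p ^ 2 - 1) ∣ p ^ (2 * (k + 1)) - p ^ (2 * k)) ∧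
    (fun k : ℕ => ((p ^ (2 * k) : ℕ) : ZMod (p ^ k * (p ^ 2 - 1)))) ∈ Zfrak p ∧
    addOrderOf (fun k : ℕ => ((p ^ (2 * k) : ℕ) : ZMod (p ^ k * (p ^ 2 - 1)))) =
      p ^ 2 - 1 ∧
    (∀ x ∈ Zfrak p, (∃ n : ℕ, 0 < n ∧ n • x = 0) ↔
      ∃ m : ℤ, x = m • (fun k : ℕ => ((p ^ (2 * k) : ℕ) : ZMod (p ^ k * (p ^ 2 - 1))))) := by
  have hp : p.Prime := Fact.out
  have hp0 : 0 < p := hp.pos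
  have hq2 : 2 ≤ p ^ 2 - 1 := by
    have : 25 ≤ p ^ 2 := by nlinarith
    omega
  have hN : ∀ k : ℕ, 0 < p ^ k * (p ^ 2 - 1) :=
    fun k => Nat.mul_pos (pow_pos hp0 k) (by omega)
  set γ : ∀ k : ℕ, ZMod (p ^ k * (p ^ 2 - 1)) :=
    fun k : ℕ => ((p ^ (2 * k) : ℕ) : ZMod (p ^ k * (p ^ 2 - 1))) with hγdef
  -- Part 1
  have hdvd : ∀ k : ℕ, p ^ k * (p ^ 2 - 1) ∣ p ^ (2 * (k + 1)) - p ^ (2 * k) := by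
    intro k
    have e1 : p ^ k * p ^ 2 * p ^ k = p ^ (2 * (k + 1)) := by ring
    have e2 : p ^ k * 1 * p ^ k = p ^ (2 * k) := by ring
    exact ⟨p ^ k, by rw [Nat.mul_sub, Nat.sub_mul, e1, e2]⟩
  -- Part 2
  have hmem : γ ∈ Zfrak p := by
    intro k
    show ZMod.castHom _ (ZMod (p ^ k * (p ^ 2 - 1))) ((p ^ (2 * (k + 1)) : ℕ) :
        ZMod (p ^ (k + 1) * (p ^ 2 - 1))) = ((p ^ (2 * k) : ℕ) : ZMod (p ^ k * (p ^ 2 - 1)))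
    rw [map_natCast, ZMod.natCast_eq_natCast_iff]
    exact ((Nat.modEq_iff_dvd'
      (Nat.pow_le_pow_right hp0 (by omega))).mpr (hdvd k)).symm
  -- `(p²−1) • γ = 0`
  have hγq : (p ^ 2 - 1) • γ = 0 := by
    funext k
    rw [Pi.smul_apply, Pi.zero_apply, hγdef, nsmul_eq_mul, ← Nat.cast_mul,
      ZMod.natCast_eq_zero_iff, mul_comm (p ^ 2 - 1)]
    exact mul_dvd_mul (pow_dvd_pow p (by omega)) dvd_rfl
  -- Part 3
  have horder : addOrderOf γ = p ^ 2 - 1 := by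
    refine Nat.dvd_antisymm (addOrderOf_dvd_of_nsmul_eq_zero hγq) ?_
    have h0 := congrFun (addOrderOf_nsmul_eq_zero γ) 0
    rw [Pi.smul_apply, Pi.zero_apply, hγdef] at h0
    simp only [mul_zero, pow_zero, Nat.cast_one, nsmul_eq_mul, mul_one] at h0
    have h1 := (ZMod.natCast_eq_zero_iff _ _).mp h0
    simp only [pow_zero, one_mul, mul_one] at h1
    rwa [← hγdef] at h1
  refine ⟨hdvd, hmem, horder, ?_⟩
  intro x hx
  have hval : ∀ k : ℕ, (((x k).val : ℕ) : ZMod (p ^ k * (p ^ 2 - 1))) = x k := by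
    intro k
    haveI : NeZero (p ^ k * (p ^ 2 - 1)) := ⟨(hN k).ne'⟩
    rw [ZMod.natCast_val, ZMod.cast_id]
  have hcomp : ∀ k : ℕ, (x (k + 1)).val ≡ (x k).val [MOD p ^ k * (p ^ 2 - 1)] := by
    intro k
    haveI : NeZero (p ^ (k + 1) * (p ^ 2 - 1)) := ⟨(hN (k + 1)).ne'⟩
    have h := hx k
    rw [ZMod.castHom_apply, ← ZMod.natCast_val, ← hval k] at h
    exact (ZMod.natCast_eq_natCast_iff _ _ _).mp h
  have hchain : ∀ i k : ℕ, (x (k + i)).val ≡ (x k).val [MOD p ^ k * (p ^ 2 - 1)] := by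
    intro i
    induction i with
    | zero => intro k; rfl
    | succ i ih =>
      intro k
      have h1 := hcomp (k + i)
      have h2 : p ^ k * (p ^ 2 - 1) ∣ p ^ (k + i) * (p ^ 2 - 1) :=
        mul_dvd_mul (pow_dvd_pow p (Nat.le_add_right k i)) dvd_rfl
      exact (h1.of_dvd h2).trans (ih k)
  constructor
  · rintro ⟨n, hn0, hnx⟩
    have hndvd : ∀ k : ℕ, p ^ k * (p ^ 2 - 1) ∣ n * (x k).val := by
      intro k
      have h := congrFun hnx k
      rw [Pi.smul_apply, Pi.zero_apply, ← hval k, nsmul_eq_mul, ← Nat.cast_mul,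
        ZMod.natCast_eq_zero_iff] at h
      exact h
    have hpk : ∀ k : ℕ, p ^ k ∣ (x k).val := by
      intro k
      set a := n.factorization p with ha
      set u := n / p ^ a with hu
      have hun : n = p ^ a * u := (Nat.ordProj_mul_ordCompl_eq_self n p).symm
      have hpu : ¬ p ∣ u := Nat.not_dvd_ordCompl hp hn0.ne'
      have h1 : p ^ a * p ^ k ∣ p ^ a * (u * (x (k + a)).val) := by
        calc p ^ a * p ^ k = p ^ (k + a) := by rw [← pow_add, add_comm]
          _ ∣ n * (x (k + a)).val := (dvd_mul_right _ _).trans (hndvd (k + a))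
          _ = p ^ a * (u * (x (k + a)).val) := by rw [hun, mul_assoc]
      have h2 : p ^ k ∣ u * (x (k + a)).val :=
        (mul_dvd_mul_iff_left (pow_ne_zero a hp0.ne')).mp h1
      have h3 : p ^ k ∣ (x (k + a)).val :=
        (Nat.Coprime.pow_left k
          ((Nat.Prime.coprime_iff_not_dvd hp).mpr hpu)).dvd_of_dvd_mul_left h2
      have h5 : (x (k + a)).val ≡ (x k).val [MOD p ^ k] :=
        (hchain a k).of_dvd (dvd_mul_right _ _)
      exact Nat.modEq_zero_iff_dvd.mp
        (h5.symm.trans (Nat.modEq_zero_iff_dvd.mpr h3))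
    have hq : ∀ k : ℕ, (x k).val ≡ (x 0).val [MOD p ^ 2 - 1] := by
      intro k
      have h := hchain k 0
      rw [Nat.zero_add] at h
      exact h.of_dvd (dvd_mul_left _ _)
    refine ⟨((x 0).val : ℤ), ?_⟩
    funext k
    rw [Pi.smul_apply, natCast_zsmul, hγdef, nsmul_eq_mul, ← Nat.cast_mul, ← hval k,
      ZMod.natCast_eq_natCast_iff]
    refine (Nat.modEq_and_modEq_iff_modEq_mul (gamma_aux_cop hp k)).mp ⟨?_, ?_⟩
    · refine (Nat.modEq_zero_iff_dvd.mpr (hpk k)).trans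
        (Nat.modEq_zero_iff_dvd.mpr ?_).symm
      exact Dvd.dvd.mul_left (pow_dvd_pow p (by omega)) _
    · have h2 := Nat.ModEq.mul_left (x 0).val (gamma_aux_pow_modeq hp0 k).symm
      rw [mul_one] at h2
      exact (hq k).trans h2
  · rintro ⟨m, rfl⟩
    refine ⟨p ^ 2 - 1, by omega, ?_⟩
    calc (p ^ 2 - 1) • (m • γ) = (((p ^ 2 - 1 : ℕ) : ℤ)) • (m • γ) :=
          (natCast_zsmul _ _).symm
      _ = (((p ^ 2 - 1 : ℕ) : ℤ) * m) • γ := (mul_smul _ _ _).symm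
      _ = (m * ((p ^ 2 - 1 : ℕ) : ℤ)) • γ := by rw [mul_comm]
      _ = m • (((p ^ 2 - 1 : ℕ) : ℤ) • γ) := mul_smul _ _ _
      _ = m • ((p ^ 2 - 1) • γ) := by rw [natCast_zsmul]
      _ = 0 := by rw [hγq, smul_zero]
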